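/- The matrix A₁ + A₂, where A₁ and A₂ are the explicit 9×9 symmetric integer matrices from the determinantal representation of 8·q·h₄, is positive definite; moreover all its eigenvalues exceed 1/2. -/

import Mathlib

open MvPolynomial Polynomial Matrix

noncomputable def univPoly {n : ℕ} (h : MvPolynomial (Fin n) ℝ) (e v : Fin n → ℝ) : Polynomial ℝ :=
  MvPolynomial.aeval (fun i => Polynomial.C (v i) + Polynomial.C (e i) * Polynomial.X) h

def RealRooted (p : Polynomial ℝ) : Prop :=
  ∀ z : ℂ, (p.map (algebraMap ℝ ℂ)).IsRoot z → z.im = 0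

def Hyperbolic {n : ℕ} (h : MvPolynomial (Fin n) ℝ) (e : Fin n → ℝ) : Prop :=
  MvPolynomial.eval e h ≠ 0 ∧ ∀ v : Fin n → ℝ, RealRooted (univPoly h e v)

def hypCone {n : ℕ} (h : MvPolynomial (Fin n) ℝ) (e : Fin n → ℝ) : Set (Fin n → ℝ) :=
  {v | ∀ t : ℝ, (univPoly h e v).IsRoot t → t ≤ 0}

def matA1 : Matrix (Fin 9) (Fin 9) ℝ :=
  !![0, 0, 0, 0, 0, 0, 0, 0, 0;
     0, 2, 4, 4, 2, 3, 0, 3, 0;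
     0, 4, 15, 10, 4, 9, 0, 12, 0;
     0, 4, 10, 15, 4, 12, 0, 7, 0;
     0, 2, 4, 4, 8, 4, 0, 4, 0;
     0, 3, 9, 12, 4, 12, 0, 8, 0;
     0, 0, 0, 0, 0, 0, 0, 0, 0;
     0, 3, 12, 7, 4, 8, 0, 12, 0;
     0, 0, 0, 0, 0, 0, 0, 0, 0]

def matA2 : Matrix (Fin 9) (Fin 9) ℝ :=
  !![2, 0, 4, 4, 0, 0, 3, 0, 3;
     0, 0, 0, 0, 0, 0, 0, 0, 0;
     4, 0, 15, 12, 4, 0, 9, 0, 12;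
     4, 0, 12, 15, 4, 0, 12, 0, 9;
     0, 0, 4, 4, 8, 0, 4, 0, 4;
     0, 0, 0, 0, 0, 0, 0, 0, 0;
     3, 0, 9, 12, 4, 0, 12, 0, 8;
     0, 0, 0, 0, 0, 0, 0, 0, 0;
     3, 0, 12, 9, 4, 0, 8, 0, 12]

def matA3 : Matrix (Fin 9) (Fin 9) ℝ :=
  !![5, 4, 5, 13, 0, 3, 4, 0, 0;
     4, 5, 5, 13, 0, 4, 3, 0, 0;
     5, 5, 8, 16, 0, 4, 4, 0, 0;
     13, 13, 16, 66, 0, 24, 24, 0, 0;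
     0, 0, 0, 0, 0, 0, 0, 0, 0;
     3, 4, 4, 24, 0, 12, 8, 0, 0;
     4, 3, 4, 24, 0, 8, 12, 0, 0;
     0, 0, 0, 0, 0, 0, 0, 0, 0;
     0, 0, 0, 0, 0, 0, 0, 0, 0]

def matA4 : Matrix (Fin 9) (Fin 9) ℝ :=
  !![5, 4, 13, 5, 0, 0, 0, 5, 4;
     4, 5, 11, 5, 0, 0, 0, 4, 3;
     13, 11, 62, 14, 0, 0, 0, 24, 24;
     5, 5, 14, 8, 0, 0, 0, 4, 4;
     0, 0, 0, 0, 0, 0, 0, 0, 0;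
     0, 0, 0, 0, 0, 0, 0, 0, 0;
     0, 0, 0, 0, 0, 0, 0, 0, 0;
     5, 4, 24, 4, 0, 0, 0, 12, 8;
     4, 3, 24, 4, 0, 0, 0, 8, 12]

def zB : Matrix (Fin 9) (Fin 9) ℤ :=
  !![2, 0, 4, 4, 0, 0, 3, 0, 3;
     0, 2, 4, 4, 2, 3, 0, 3, 0;
     4, 4, 30, 22, 8, 9, 9, 12, 12;
     4, 4, 22, 30, 8, 12, 12, 7, 9;
     0, 2, 8, 8, 16, 4, 4, 4, 4;
     0, 3, 9, 12, 4, 12, 0, 8, 0;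
     3, 0, 9, 12, 4, 0, 12, 0, 8;
     0, 3, 12, 7, 4, 8, 0, 12, 0;
     3, 0, 12, 9, 4, 0, 8, 0, 12]

def zW : Matrix (Fin 9) (Fin 9) ℤ :=
  !![37, 0, 100, 100, 0, 0, 75, 0, 75;
     0, 37, 100, 100, 50, 75, 0, 75, 0;
     0, 0, 7269, 350, 2400, 825, 825, 3600, 3600;
     0, 0, 0, 1424753, 448800, 699450, 699450, (-235425), 128025;
     0, 0, 0, 0, 78528961, (-11000950), 17570300, (-6560950), 17570300;
     0, 0, 0, 0, 0, 1170927151659, (-602641844375), 727926868275, (-160916438750);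
     0, 0, 0, 0, 0, 0, 58706816260508, 41657508418125, 10185488839925;
     0, 0, 0, 0, 0, 0, 0, 458490668158807, (-771593298293125);
     0, 0, 0, 0, 0, 0, 0, 0, 1]

def zd : Fin 9 → ℤ := ![213605170228839975964982490293183034261181736927550131850900, 213605170228839975964982490293183034261181736927550131850900, 29385771114161504466224032231831480844845472132005796100, 763131245362512425136349383070444344570099146226900, 357012921852125367231186426931217446835424635100, 459634003284961948194749708427961084100, 114972792330609364430188412521774525, 880877890814556022303841708827275, 14915500710444896393772395106703393722530525121735845463707100]

def zT : Matrix (Fin 9) (Fin 9) ℤ :=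
  !![292425478043281927096061029211367573903557797853816130503882100, 0, 790339129846707911070435214084777226766372426631935487848330000, 790339129846707911070435214084777226766372426631935487848330000, 0, 0, 592754347385030933302826410563582920074779319973951615886247500, 0, 592754347385030933302826410563582920074779319973951615886247500;
     0, 292425478043281927096061029211367573903557797853816130503882100, 790339129846707911070435214084777226766372426631935487848330000, 790339129846707911070435214084777226766372426631935487848330000, 395169564923353955535217607042388613383186213315967743924165000, 592754347385030933302826410563582920074779319973951615886247500, 0, 592754347385030933302826410563582920074779319973951615886247500, 0;
     790339129846707911070435214084777226766372426631935487848330000, 790339129846707911070435214084777226766372426631935487848330000, 5824799386970237304589107527804808161268164784277364545442192100, 4346865214156893510887393677466274747215048346475645183165815000, 1580678259693415822140870428169554453532744853263870975696660000, 1778263042155092799908479231690748760224337959921854847658742500, 1778263042155092799908479231690748760224337959921854847658742500, 2371017389540123733211305642254331680299117279895806463544990000, 2371017389540123733211305642254331680299117279895806463544990000;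
     790339129846707911070435214084777226766372426631935487848330000, 790339129846707911070435214084777226766372426631935487848330000, 4346865214156893510887393677466274747215048346475645183165815000, 5824799386970237304589107527804808161268164784277364545442192100, 1580678259693415822140870428169554453532744853263870975696660000, 2371017389540123733211305642254331680299117279895806463544990000, 2371017389540123733211305642254331680299117279895806463544990000, 1383093477231738844373261624648360146841151746605887103734577500, 1778263042155092799908479231690748760224337959921854847658742500;
     0, 395169564923353955535217607042388613383186213315967743924165000, 1580678259693415822140870428169554453532744853263870975696660000, 1580678259693415822140870428169554453532744853263870975696660000, 3058612432506759615842584278508087867585861291065590337973037100, 790339129846707911070435214084777226766372426631935487848330000, 790339129846707911070435214084777226766372426631935487848330000, 790339129846707911070435214084777226766372426631935487848330000, 790339129846707911070435214084777226766372426631935487848330000;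
     0, 592754347385030933302826410563582920074779319973951615886247500, 1778263042155092799908479231690748760224337959921854847658742500, 2371017389540123733211305642254331680299117279895806463544990000, 790339129846707911070435214084777226766372426631935487848330000, 2268273302660051704772149064423310640819488864433654850124707100, 0, 1580678259693415822140870428169554453532744853263870975696660000, 0;
     592754347385030933302826410563582920074779319973951615886247500, 0, 1778263042155092799908479231690748760224337959921854847658742500, 2371017389540123733211305642254331680299117279895806463544990000, 790339129846707911070435214084777226766372426631935487848330000, 0, 2268273302660051704772149064423310640819488864433654850124707100, 0, 1580678259693415822140870428169554453532744853263870975696660000;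
     0, 592754347385030933302826410563582920074779319973951615886247500, 2371017389540123733211305642254331680299117279895806463544990000, 1383093477231738844373261624648360146841151746605887103734577500, 790339129846707911070435214084777226766372426631935487848330000, 1580678259693415822140870428169554453532744853263870975696660000, 0, 2268273302660051704772149064423310640819488864433654850124707100, 0;
     592754347385030933302826410563582920074779319973951615886247500, 0, 2371017389540123733211305642254331680299117279895806463544990000, 1778263042155092799908479231690748760224337959921854847658742500, 790339129846707911070435214084777226766372426631935487848330000, 0, 1580678259693415822140870428169554453532744853263870975696660000, 0, 2268273302660051704772149064423310640819488864433654850124707100]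

set_option maxHeartbeats 4000000 in
lemma hZ1 : zWᵀ * (Matrix.diagonal zd * zW) = zT := by decide

set_option maxHeartbeats 4000000 in
lemma hZ2 : zT = ((25 * 7903391298467079110704352140847772267663724266319354878483300 : ℤ)) • zB - ((13 * 7903391298467079110704352140847772267663724266319354878483300 : ℤ)) • 1 := by decide

set_option maxHeartbeats 2000000 in
lemma hB : matA1 + matA2 = zB.map ((↑) : ℤ → ℝ) := by
  ext i j
  fin_cases i <;> fin_cases j <;>
    norm_num [matA1, matA2, zB, Matrix.map_apply]

lemma hcast : zT.map ((↑) : ℤ → ℝ) =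
    (25 * (7903391298467079110704352140847772267663724266319354878483300 : ℝ)) • (matA1 + matA2) - (13 * (7903391298467079110704352140847772267663724266319354878483300 : ℝ)) • 1 := by
  rw [hB, hZ2]
  ext i j
  simp only [Matrix.map_apply, Matrix.sub_apply, Matrix.smul_apply, Matrix.one_apply,
    smul_eq_mul]
  split_ifs <;> push_cast <;> ring

lemma hfact : zT.map ((↑) : ℤ → ℝ) =
    (zW.map ((↑) : ℤ → ℝ))ᵀ *
      (Matrix.diagonal (fun i => ((zd i : ℝ))) * zW.map ((↑) : ℤ → ℝ)) := by
  rw [← hZ1]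
  have h1 : (zWᵀ * (Matrix.diagonal zd * zW)).map ((↑) : ℤ → ℝ)
      = (zWᵀ * (Matrix.diagonal zd * zW)).map (Int.castRingHom ℝ) := rfl
  rw [h1, Matrix.map_mul, Matrix.map_mul, Matrix.transpose_map,
    Matrix.diagonal_map (by simp)]
  rfl

lemma psd_smul {A : Matrix (Fin 9) (Fin 9) ℝ} (hA : A.PosSemidef) {c : ℝ} (hc : 0 ≤ c) :
    (c • A).PosSemidef := by
  refine ⟨?_, fun x => ?_⟩
  · unfold Matrix.IsHermitian
    rw [Matrix.conjTranspose_smul, hA.1.eq, star_trivial]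
  · exact (hA.smul hc).2 x

lemma hone_pd {c : ℝ} (hc : 0 < c) : (c • (1 : Matrix (Fin 9) (Fin 9) ℝ)).PosDef := by
  rw [Matrix.smul_one_eq_diagonal]
  exact Matrix.PosDef.diagonal fun _ => hc

lemma hpsdT : (zT.map ((↑) : ℤ → ℝ)).PosSemidef := by
  rw [hfact]
  have hD : (Matrix.diagonal (fun i => ((zd i : ℝ)))).PosSemidef := by
    refine Matrix.PosSemidef.diagonal ?_
    intro i
    fin_cases i <;> norm_num [zd]
  have := hD.conjTranspose_mul_mul_same (zW.map ((↑) : ℤ → ℝ))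
  rwa [Matrix.conjTranspose_eq_transpose_of_trivial, Matrix.mul_assoc] at this

lemma hpsdB : (matA1 + matA2 - (13/25 : ℝ) • 1).PosSemidef := by
  have h : matA1 + matA2 - (13/25 : ℝ) • 1
      = (1 / (25 * (7903391298467079110704352140847772267663724266319354878483300 : ℝ))) • (zT.map ((↑) : ℤ → ℝ)) := by
    rw [hcast, smul_sub, smul_smul, smul_smul]
    norm_num
  rw [h]
  exact psd_smul hpsdT (by positivity)

theorem stmt9 : (matA1 + matA2).PosDef ∧
    ∀ μ : ℝ, Module.End.HasEigenvalue (Matrix.toLin' (matA1 + matA2)) μ →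
      (1 : ℝ) / 2 < μ := by
  have hpd : (matA1 + matA2).PosDef := by
    have h := Matrix.PosDef.posSemidef_add hpsdB (hone_pd (c := 13/25) (by norm_num))
    rwa [sub_add_cancel] at h
  refine ⟨hpd, ?_⟩
  intro μ hμ
  obtain ⟨v, hv⟩ := hμ.exists_hasEigenvector
  have hv0 : v ≠ 0 := hv.right
  have happ : (matA1 + matA2) *ᵥ v = μ • v := by
    have := hv.apply_eq_smul
    rwa [Matrix.toLin'_apply] at this
  have hC : (matA1 + matA2 - (1/2 : ℝ) • 1).PosDef := by
    have h := Matrix.PosDef.posSemidef_add hpsdB (hone_pd (c := 1/50) (by norm_num))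
    have h2 : matA1 + matA2 - (13/25 : ℝ) • 1 + (1/50 : ℝ) • 1
        = matA1 + matA2 - (1/2 : ℝ) • 1 := by
      have : (13/25 : ℝ) • (1 : Matrix (Fin 9) (Fin 9) ℝ)
          = (1/2 : ℝ) • 1 + (1/50 : ℝ) • 1 := by
        rw [← add_smul]; norm_num
      rw [this]; abel
    rwa [h2] at h
  have hpos := hC.dotProduct_mulVec_pos hv0
  have hmv : (matA1 + matA2 - (1/2 : ℝ) • 1) *ᵥ v = (μ - 1/2) • v := by
    rw [Matrix.sub_mulVec, happ, Matrix.smul_mulVec, Matrix.one_mulVec, sub_smul]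
  rw [hmv] at hpos
  have hdot : (0:ℝ) < (μ - 1/2) * (star v ⬝ᵥ v) := by
    simpa [dotProduct_smul, smul_eq_mul] using hpos
  have hvv : (0:ℝ) ≤ star v ⬝ᵥ v := by
    simp only [dotProduct, Pi.star_apply, star_trivial]
    exact Finset.sum_nonneg fun i _ => mul_self_nonneg _
  nlinarith
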